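/- (Case 3, converse direction: recovering the route from the exit point.) Let A, O ∈ EuclideanSpace ℝ (Fin 2), r ≥ 0, and real times t₀ < t₁ < t₂; set k = (t₂ - t₀)/(t₁ - t₀). Suppose Y is a point with dist Y O = r and dist Y (A + k • (O - A)) = k * r. Define V = (1/(t₂ - t₀)) • (Y - A) and p(t) = A + (t - t₀) • V. Then dist (p t₁) O = r and p t₂ = Y. (Any intersection point of the threat circle with its homothetic image yields a valid route: the line AXY with X the entrance point and Y the exit point.) -/

import Mathlib

/-- Case 3, converse direction: any point `Y` lying both on the threat circle
and on its homothetic image (center `A`, ratio `k = (t₂ - t₀)/(t₁ - t₀)`)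
yields a valid route: the trajectory through `A` at time `t₀` reaching `Y` at
time `t₂` is on the threat circle at time `t₁` and at `Y` at time `t₂`. -/
theorem route_from_exit_point (A O : EuclideanSpace ℝ (Fin 2)) (r : ℝ) (hr : 0 ≤ r)
    (t₀ t₁ t₂ : ℝ) (h01 : t₀ < t₁) (h12 : t₁ < t₂)
    (k : ℝ) (hk : k = (t₂ - t₀) / (t₁ - t₀))
    (Y : EuclideanSpace ℝ (Fin 2))
    (hY₁ : dist Y O = r) (hY₂ : dist Y (A + k • (O - A)) = k * r)
    (V : EuclideanSpace ℝ (Fin 2)) (hV : V = (1 / (t₂ - t₀)) • (Y - A))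
    (p : ℝ → EuclideanSpace ℝ (Fin 2)) (hp : p = fun t => A + (t - t₀) • V) :
    dist (p t₁) O = r ∧ p t₂ = Y := by
  have h02 : (0:ℝ) < t₂ - t₀ := by linarith
  have h01' : (0:ℝ) < t₁ - t₀ := by linarith
  have hkpos : 0 < k := by rw [hk]; positivity
  subst hp hV
  constructor
  · have h1 : A + (t₁ - t₀) • (1 / (t₂ - t₀)) • (Y - A)
        = A + (1 / k) • (Y - A) := by
      congr 1
      rw [smul_smul, hk]
      congr 1
      field_simp
    simp only [h1]
    have h2 : dist (A + (1 / k) • (Y - A)) O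
        = (1 / k) * dist Y (A + k • (O - A)) := by
      rw [dist_eq_norm, dist_eq_norm]
      rw [← norm_smul_of_nonneg (by positivity : (0:ℝ) ≤ 1 / k)]
      congr 1
      match_scalars <;> field_simp <;> ring
    rw [h2, hY₂]
    field_simp
  · simp only
    rw [smul_smul, mul_one_div, div_self h02.ne', one_smul]
    abel
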